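/- Let Σ = (o^{n_1} → o) × ⋯ × (o^{n_l} → o). Every parametric family ρ of type Σ → o has all components λ-definable: for every finite set Q there exists a closed simply typed λ-term M : Σ → o with ρ_Q = ⟦M⟧_Q. -/

import Mathlib

/-- Simple types over one base type `o`, with products and unit. -/
inductive Ty : Type
  | o : Ty
  | arr : Ty → Ty → Ty
  | prod : Ty → Ty → Ty
  | unit : Ty

/-- Set-theoretic semantics of simple types, with base type interpreted as `Q`. -/
def sem (Q : Type) : Ty → Type
  | .o => Q
  | .arr A B => sem Q A → sem Q B
  | .prod A B => sem Q A × sem Q B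
  | .unit => PUnit

/-- Typed de Bruijn variables. -/
inductive Var : List Ty → Ty → Type
  | vz {Γ A} : Var (A :: Γ) A
  | vs {Γ A B} : Var Γ A → Var (B :: Γ) A

/-- Intrinsically typed terms of the simply typed λ-calculus with products. -/
inductive Tm : List Ty → Ty → Type
  | var {Γ A} : Var Γ A → Tm Γ A
  | lam {Γ A B} : Tm (A :: Γ) B → Tm Γ (.arr A B)
  | app {Γ A B} : Tm Γ (.arr A B) → Tm Γ A → Tm Γ B
  | pair {Γ A B} : Tm Γ A → Tm Γ B → Tm Γ (.prod A B)
  | fst {Γ A B} : Tm Γ (.prod A B) → Tm Γ A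
  | snd {Γ A B} : Tm Γ (.prod A B) → Tm Γ B
  | star {Γ} : Tm Γ .unit

/-- Semantics of contexts. -/
def semCtx (Q : Type) : List Ty → Type
  | [] => PUnit
  | A :: Γ => sem Q A × semCtx Q Γ

/-- Semantics of variables. -/
def evalVar (Q : Type) : {Γ : List Ty} → {A : Ty} → Var Γ A → semCtx Q Γ → sem Q A
  | _, _, .vz, ρ => ρ.1
  | _, _, .vs x, ρ => evalVar Q x ρ.2

/-- Semantics of terms. -/
def eval (Q : Type) : {Γ : List Ty} → {A : Ty} → Tm Γ A → semCtx Q Γ → sem Q A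
  | _, _, .var x, ρ => evalVar Q x ρ
  | _, _, .lam M, ρ => fun a => eval Q M (a, ρ)
  | _, _, .app M N, ρ => eval Q M ρ (eval Q N ρ)
  | _, _, .pair M N, ρ => (eval Q M ρ, eval Q N ρ)
  | _, _, .fst M, ρ => (eval Q M ρ).1
  | _, _, .snd M, ρ => (eval Q M ρ).2
  | _, _, .star, _ => PUnit.unit

/-- Semantics `⟦M⟧_Q` of a closed term `M`. -/
def ev0 (Q : Type) {A : Ty} (M : Tm [] A) : sem Q A := eval Q M PUnit.unit

/-- The logical relation `⟦A⟧_R` induced by a relation `R ⊆ Q × Q'`. -/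
def rel {Q Q' : Type} (R : Q → Q' → Prop) : (A : Ty) → sem Q A → sem Q' A → Prop
  | .o, a, b => R a b
  | .arr A B, f, g => ∀ x y, rel R A x y → rel R B (f x) (g y)
  | .prod A B, p, q => rel R A p.1 q.1 ∧ rel R B p.2 q.2
  | .unit, _, _ => True

/-- The type `o^n → o` (curried). -/
def onArr : ℕ → Ty
  | 0 => .o
  | n + 1 => .arr .o (onArr n)

/-- The type `Σ = (o^{n_1} → o) × ⋯ × (o^{n_l} → o)` of a ranked alphabet. -/
def SigTy : List ℕ → Ty
  | [] => .unit
  | n :: ns => .prod (onArr n) (SigTy ns)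

/-- Currying: `((Fin n → Q) → Q) → ⟦o^n → o⟧_Q`. -/
def curryN (Q : Type) : (n : ℕ) → ((Fin n → Q) → Q) → sem Q (onArr n)
  | 0, f => f Fin.elim0
  | n + 1, f => fun q => curryN Q n (fun g => f (Fin.cons q g))

/-- Uncurrying: `⟦o^n → o⟧_Q → (Fin n → Q) → Q`. -/
def uncurryN (Q : Type) : (n : ℕ) → sem Q (onArr n) → (Fin n → Q) → Q
  | 0, x, _ => x
  | n + 1, x, g => uncurryN Q n (x (g 0)) (fun j => g j.succ)

/-- The `i`-th projection `⟦Σ⟧_Q → ⟦o^{n_i} → o⟧_Q`. -/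
def projSem (Q : Type) : (ns : List ℕ) → (i : Fin ns.length) →
    sem Q (SigTy ns) → sem Q (onArr (ns.get i))
  | [], i, _ => i.elim0
  | _ :: _, ⟨0, _⟩, σ => σ.1
  | _ :: ns, ⟨i + 1, h⟩, σ =>
      projSem Q ns ⟨i, Nat.succ_lt_succ_iff.mp h⟩ σ.2

/-- Tupling a family of components into an element of `⟦Σ⟧_B`. -/
def tupleOf (B : Type) : (ns : List ℕ) →
    ((i : Fin ns.length) → sem B (onArr (ns.get i))) → sem B (SigTy ns)
  | [], _ => PUnit.unit
  | _ :: ns, G => (G ⟨0, Nat.succ_pos _⟩, tupleOf B ns (fun i => G i.succ))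

/-- The semantics of the `i`-th generator term
`g_i(t_1,…,t_{n_i}) := λσ. σ.i (t_1 σ) ⋯ (t_{n_i} σ)` of type
`(Σ → o)^{n_i} → (Σ → o)`, seen as an element of `⟦o^{n_i} → o⟧` over the base set
`⟦Σ → o⟧_Q`. -/
def gsem (Q : Type) (ns : List ℕ) (i : Fin ns.length) :
    sem (sem Q (.arr (SigTy ns) .o)) (onArr (ns.get i)) :=
  curryN _ (ns.get i) (fun ts => (fun σ =>
    uncurryN Q (ns.get i) (projSem Q ns i σ) (fun j => ts j σ) : sem Q (.arr (SigTy ns) .o)))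

/-- The interpretation of any simple type at a finite set is finite. -/
instance semFinite (Q : Type) [Finite Q] : ∀ (A : Ty), Finite (sem Q A)
  | .o => ‹Finite Q›
  | .arr A B => by
      haveI := semFinite Q A; haveI := semFinite Q B
      exact Pi.finite
  | .prod A B => by
      haveI := semFinite Q A; haveI := semFinite Q B
      exact Finite.instProd
  | .unit => inferInstanceAs (Finite PUnit.{1})

/-! ### Auxiliary machinery -/

/-- Renamings between contexts. -/
def Ren (Γ Δ : List Ty) : Type := ∀ (A : Ty), Var Γ A → Var Δ A

/-- Lifting a renaming under a binder. -/
def Ren.lift {Γ Δ : List Ty} (r : Ren Γ Δ) (B : Ty) : Ren (B :: Γ) (B :: Δ) :=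
  fun _ v => match v with
  | .vz => .vz
  | .vs x => .vs (r _ x)

/-- Renaming a term. -/
def rename : {Γ Δ : List Ty} → {A : Ty} → Ren Γ Δ → Tm Γ A → Tm Δ A
  | _, _, _, r, .var x => .var (r _ x)
  | _, _, _, r, .lam M => .lam (rename (r.lift _) M)
  | _, _, _, r, .app M N => .app (rename r M) (rename r N)
  | _, _, _, r, .pair M N => .pair (rename r M) (rename r N)
  | _, _, _, r, .fst M => .fst (rename r M)
  | _, _, _, r, .snd M => .snd (rename r M)
  | _, _, _, _, .star => .star

theorem eval_rename (Q : Type) :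
    ∀ {Γ : List Ty} {A : Ty} (M : Tm Γ A) {Δ : List Ty} (r : Ren Γ Δ)
      (γ : semCtx Q Γ) (δ : semCtx Q Δ),
      (∀ (B : Ty) (x : Var Γ B), evalVar Q (r _ x) δ = evalVar Q x γ) →
      eval Q (rename r M) δ = eval Q M γ := by
  intro Γ A M
  induction M with
  | var x => intro Δ r γ δ h; exact h _ x
  | lam M ih =>
      intro Δ r γ δ h
      funext a
      apply ih (r.lift _) (a, γ) (a, δ)
      intro B x
      cases x with
      | vz => rfl
      | vs x => exact h _ x
  | app M N ihM ihN =>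
      intro Δ r γ δ h
      simp only [rename, eval, ihM r γ δ h, ihN r γ δ h]
  | pair M N ihM ihN =>
      intro Δ r γ δ h
      simp only [rename, eval, ihM r γ δ h, ihN r γ δ h]
      rfl
  | fst M ih =>
      intro Δ r γ δ h
      simp only [rename, eval, ih r γ δ h]
  | snd M ih =>
      intro Δ r γ δ h
      simp only [rename, eval, ih r γ δ h]
  | star => intro Δ r γ δ h; rfl

/-- Weakening of a closed term to an arbitrary context. -/
def Ren.ofNil {Δ : List Ty} : Ren [] Δ := fun _ x => nomatch x

def wk0 {Γ : List Ty} {A : Ty} (M : Tm [] A) : Tm Γ A :=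
  rename Ren.ofNil M

theorem eval_wk0 (Q : Type) {Γ : List Ty} {A : Ty} (M : Tm [] A) (γ : semCtx Q Γ) :
    eval Q (wk0 M) γ = ev0 Q M := by
  apply eval_rename
  intro B x
  exact nomatch x

/-- Syntactic `i`-th projection. -/
def projTm : (ns : List ℕ) → (i : Fin ns.length) → {Γ : List Ty} →
    Tm Γ (SigTy ns) → Tm Γ (onArr (ns.get i))
  | [], i, _, _ => i.elim0
  | _ :: _, ⟨0, _⟩, _, t => .fst t
  | _ :: ns, ⟨i + 1, h⟩, _, t => projTm ns ⟨i, Nat.succ_lt_succ_iff.mp h⟩ (.snd t)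

theorem eval_projTm (Q : Type) : ∀ (ns : List ℕ) (i : Fin ns.length) {Γ : List Ty}
    (t : Tm Γ (SigTy ns)) (γ : semCtx Q Γ),
    eval Q (projTm ns i t) γ = projSem Q ns i (eval Q t γ)
  | [], i, _, _, _ => i.elim0
  | _ :: _, ⟨0, _⟩, _, t, γ => rfl
  | _ :: ns, ⟨i + 1, h⟩, _, t, γ =>
      eval_projTm Q ns ⟨i, Nat.succ_lt_succ_iff.mp h⟩ (.snd t) γ

/-- Syntactic iterated application. -/
def applyN : (n : ℕ) → {Γ : List Ty} → Tm Γ (onArr n) → (Fin n → Tm Γ .o) → Tm Γ .o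
  | 0, _, t, _ => t
  | n + 1, _, t, a => applyN n (.app t (a 0)) (fun j => a j.succ)

theorem eval_applyN (Q : Type) : ∀ (n : ℕ) {Γ : List Ty} (t : Tm Γ (onArr n))
    (a : Fin n → Tm Γ .o) (γ : semCtx Q Γ),
    eval Q (applyN n t a) γ = uncurryN Q n (eval Q t γ) (fun j => eval Q (a j) γ)
  | 0, _, t, a, γ => rfl
  | n + 1, _, t, a, γ => eval_applyN Q n (.app t (a 0)) (fun j => a j.succ) γ

theorem uncurry_curry (Q : Type) : ∀ (n : ℕ) (F : (Fin n → Q) → Q) (f : Fin n → Q),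
    uncurryN Q n (curryN Q n F) f = F f
  | 0, F, f => by
      show F Fin.elim0 = F f
      congr 1
      funext j
      exact j.elim0
  | n + 1, F, f => by
      show uncurryN Q n (curryN Q n fun g => F (Fin.cons (f 0) g)) (fun j => f j.succ) = F f
      rw [uncurry_curry Q n]
      congr 1
      funext j
      exact Fin.cases rfl (fun j => rfl) j

theorem rel_onArr_of {Q Q' : Type} (R : Q → Q' → Prop) :
    ∀ (n : ℕ) (x : sem Q (onArr n)) (y : sem Q' (onArr n)),
    (∀ (f : Fin n → Q) (g : Fin n → Q'), (∀ j, R (f j) (g j)) →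
      R (uncurryN Q n x f) (uncurryN Q' n y g)) →
    rel R (onArr n) x y
  | 0, x, y, h => h Fin.elim0 Fin.elim0 (fun j => j.elim0)
  | n + 1, x, y, h => by
      intro a b hab
      apply rel_onArr_of R n
      intro f g hfg
      have := h (Fin.cons a f) (Fin.cons b g) (by
        intro j
        refine Fin.cases ?_ ?_ j
        · exact hab
        · intro j; exact hfg j)
      exact this

theorem rel_tuple {Q Q' : Type} (R : Q → Q' → Prop) :
    ∀ (ns : List ℕ) (G : (i : Fin ns.length) → sem Q (onArr (ns.get i)))
      (σ : sem Q' (SigTy ns)),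
      (∀ i, rel R (onArr (ns.get i)) (G i) (projSem Q' ns i σ)) →
      rel R (SigTy ns) (tupleOf Q ns G) σ
  | [], _, _, _ => trivial
  | n :: ns, G, σ, h => by
      constructor
      · exact h ⟨0, Nat.succ_pos _⟩
      · apply rel_tuple R ns (fun i => G i.succ) σ.2
        intro i
        exact h i.succ

/-- A default element of the semantics over `PUnit`. -/
def defSem : (A : Ty) → sem PUnit A
  | .o => PUnit.unit
  | .arr _ B => fun _ => defSem B
  | .prod A B => (defSem A, defSem B)
  | .unit => PUnit.unit

/-- The generators preserve λ-definability. -/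
theorem gsem_definable (Q : Type) (ns : List ℕ) (i : Fin ns.length)
    (fs : Fin (ns.get i) → sem Q (.arr (SigTy ns) .o))
    (hfs : ∀ j, ∃ M : Tm [] (.arr (SigTy ns) .o), fs j = ev0 Q M) :
    ∃ M : Tm [] (.arr (SigTy ns) .o),
      uncurryN _ (ns.get i) (gsem Q ns i) fs = ev0 Q M := by
  choose Ms hMs using hfs
  refine ⟨.lam (applyN (ns.get i) (projTm ns i (.var .vz))
    (fun j => .app (wk0 (Ms j)) (.var .vz))), ?_⟩
  unfold gsem
  refine (uncurry_curry _ _ _ _).trans ?_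
  funext σ
  show uncurryN Q (ns.get i) (projSem Q ns i σ) (fun j => fs j σ)
      = eval Q (applyN (ns.get i) (projTm ns i (.var .vz))
          (fun j => .app (wk0 (Ms j)) (.var .vz))) ((σ, PUnit.unit) : semCtx Q [SigTy ns])
  refine Eq.trans ?_ ((eval_applyN Q _ _ _ _).trans
    (congrArg (fun x => uncurryN Q (ns.get i) x _) (eval_projTm Q ns i _ _))).symm
  congr 1
  funext j
  show fs j σ = eval Q ((wk0 (Ms j) : Tm [SigTy ns] (.arr (SigTy ns) .o)).app (.var .vz))
      ((σ, PUnit.unit) : semCtx Q [SigTy ns])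
  have h1 : eval Q (wk0 (Ms j) : Tm [SigTy ns] (.arr (SigTy ns) .o))
      ((σ, PUnit.unit) : semCtx Q [SigTy ns]) = ev0 Q (Ms j) := eval_wk0 Q (Ms j) _
  show fs j σ = eval Q (wk0 (Ms j) : Tm [SigTy ns] (.arr (SigTy ns) .o))
      ((σ, PUnit.unit) : semCtx Q [SigTy ns]) σ
  rw [h1, ← hMs j]

/-- every parametric family `ρ` of type
`Σ → o = ((o^{n_1} → o) × ⋯ × (o^{n_l} → o)) → o` has all components λ-definable:
for every finite set `Q` there is a closed term `M : Σ → o` with `ρ_Q = ⟦M⟧_Q`. -/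
theorem parametric_family_definable (ns : List ℕ)
    (ρ : ∀ (Q : Type), Finite Q → sem Q (.arr (SigTy ns) .o))
    (hpar : ∀ (Q Q' : Type) (hQ : Finite Q) (hQ' : Finite Q') (R : Q → Q' → Prop),
      rel R (.arr (SigTy ns) .o) (ρ Q hQ) (ρ Q' hQ')) :
    ∀ (Q : Type) (hQ : Finite Q),
      ∃ M : Tm [] (.arr (SigTy ns) .o), ρ Q hQ = ev0 Q M := by
  intro Q hQ
  haveI := hQ
  haveI instB : Finite (sem Q (.arr (SigTy ns) .o)) := semFinite Q _
  -- Step 2: `ρ` at the base set `B = ⟦Σ → o⟧_Q`, applied to the generators, is definable.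
  have hdef : ∃ M : Tm [] (.arr (SigTy ns) .o),
      ρ (sem Q (.arr (SigTy ns) .o)) instB (tupleOf _ ns (gsem Q ns)) = ev0 Q M := by
    have h := hpar (sem Q (.arr (SigTy ns) .o)) PUnit instB inferInstance
      (fun b _ => ∃ M : Tm [] (.arr (SigTy ns) .o), b = ev0 Q M)
    exact h (tupleOf _ ns (gsem Q ns)) (defSem _)
      (rel_tuple _ ns _ _ (fun i => by
        apply rel_onArr_of
        intro f g hfg
        exact gsem_definable Q ns i f hfg))
  -- Step 1: the fixed-point equation `ρ_Q = ρ_B(g₁,…,g_l)`.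
  have heq : ∀ σ : sem Q (SigTy ns),
      ρ (sem Q (.arr (SigTy ns) .o)) instB (tupleOf _ ns (gsem Q ns)) σ = ρ Q hQ σ := by
    intro σ
    have h := hpar (sem Q (.arr (SigTy ns) .o)) Q instB hQ (fun b q => b σ = q)
    apply h
    apply rel_tuple
    intro i
    apply rel_onArr_of
    intro f g hfg
    show uncurryN _ _ (gsem Q ns i) f σ = uncurryN Q _ (projSem Q ns i σ) g
    unfold gsem
    refine (congrFun (uncurry_curry _ _ _ f) σ).trans ?_
    show uncurryN Q _ (projSem Q ns i σ) (fun j => f j σ) = _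
    congr 1
    funext j
    exact hfg j
  obtain ⟨M, hM⟩ := hdef
  refine ⟨M, ?_⟩
  rw [← hM]
  funext σ
  exact (heq σ).symm
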